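/- Let λ₁ > 0, σ² > 0, θ ∈ ℝ^p, τ_1, ..., τ_p with τ_j > 1 for all j, and GIG prior hyperparameters ν₂ ∈ ℝ, ψ₂ > 0, χ₂ > 0. Then there exists a constant c > 0, independent of l, such that for all l > 0: [Π_{j=1}^p (lτ_j/(σ²(τ_j−1)))^{1/2} exp(−lτ_jθ_j²/(2σ²(τ_j−1)))] · [Π_{j=1}^p (λ₁²/(8lσ²))^{1/2} exp(−τ_jλ₁²/(8lσ²))] · l^{ν₂−1} exp(−(1/2)(χ₂/l + ψ₂ l)) = c · l^{ν₂−1} exp(−(1/2)[ (Σ_{j=1}^p (τ_j/(τ_j−1))θ_j²/σ² + ψ₂) l + (Σ_{j=1}^p τ_jλ₁²/(4σ²) + χ₂)/l ]). That is, under a GIG(ν₂, ψ₂, χ₂) prior on λ₂, the full conditional of λ₂ is GIG(ν = ν₂, ψ = Σ_j (τ_j/(τ_j−1))θ_j²/σ² + ψ₂, χ = Σ_j τ_jλ₁²/(4σ²) + χ₂), so the GIG prior is conjugate for λ₂. -/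

import Mathlib

open Real
open scoped BigOperators

/-- Under a GIG(ν₂, ψ₂, χ₂) prior on λ₂ = l, the full conditional of λ₂ is
GIG(ν₂, Σ_j (τ_j/(τ_j−1))θ_j²/σ² + ψ₂, Σ_j τ_jλ₁²/(4σ²) + χ₂): the GIG prior is
conjugate for λ₂. -/
theorem lambda2_full_conditional_is_GIG
    (p : ℕ) (l1 s2 : ℝ) (h1 : 0 < l1) (hs : 0 < s2)
    (θ τ : Fin p → ℝ) (hτ : ∀ j, 1 < τ j)
    (ν2 ψ2 χ2 : ℝ) (hψ : 0 < ψ2) (hχ : 0 < χ2) :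
    ∃ c : ℝ, 0 < c ∧ ∀ l : ℝ, 0 < l →
      (∏ j, (l * τ j / (s2 * (τ j - 1))) ^ ((1:ℝ)/2)
          * Real.exp (-(l * τ j * (θ j)^2) / (2 * s2 * (τ j - 1))))
        * (∏ j, (l1^2 / (8 * l * s2)) ^ ((1:ℝ)/2)
            * Real.exp (-(τ j * l1^2) / (8 * l * s2)))
        * (l ^ (ν2 - 1) * Real.exp (-(1/2) * (χ2 / l + ψ2 * l)))
      = c * l ^ (ν2 - 1)
          * Real.exp (-(1/2) * ((∑ j, (τ j / (τ j - 1)) * (θ j)^2 / s2 + ψ2) * l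
              + (∑ j, τ j * l1^2 / (4 * s2) + χ2) / l)) := by
  have hτ' : ∀ j, (0:ℝ) < τ j - 1 := fun j => sub_pos.2 (hτ j)
  have hτ0 : ∀ j, (0:ℝ) < τ j := fun j => lt_trans one_pos (hτ j)
  refine ⟨(∏ j, (τ j / (s2 * (τ j - 1))) ^ ((1:ℝ)/2))
      * ∏ j : Fin p, (l1^2 / (8 * s2)) ^ ((1:ℝ)/2), ?_, ?_⟩
  · apply mul_pos
    · exact Finset.prod_pos fun j _ =>
        Real.rpow_pos_of_pos (div_pos (hτ0 j) (mul_pos hs (hτ' j))) _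
    · exact Finset.prod_pos fun j _ =>
        Real.rpow_pos_of_pos (by positivity) _
  intro l hl
  have hprod1 : (∏ j, (l * τ j / (s2 * (τ j - 1))) ^ ((1:ℝ)/2)
          * Real.exp (-(l * τ j * (θ j)^2) / (2 * s2 * (τ j - 1))))
      = (l ^ ((1:ℝ)/2)) ^ p * ((∏ j, (τ j / (s2 * (τ j - 1))) ^ ((1:ℝ)/2))
        * Real.exp (∑ j, -(l * τ j * (θ j)^2) / (2 * s2 * (τ j - 1)))) := by
    rw [Real.exp_sum, ← Finset.prod_mul_distrib,
      show (l ^ ((1:ℝ)/2))^p = ∏ _j : Fin p, l ^ ((1:ℝ)/2) by simp,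
      ← Finset.prod_mul_distrib]
    refine Finset.prod_congr rfl fun j _ => ?_
    have h1j : (0:ℝ) < τ j / (s2 * (τ j - 1)) := div_pos (hτ0 j) (mul_pos hs (hτ' j))
    rw [show l * τ j / (s2 * (τ j - 1)) = l * (τ j / (s2 * (τ j - 1))) by ring,
      Real.mul_rpow hl.le h1j.le, mul_assoc]
  have hprod2 : (∏ j, (l1^2 / (8 * l * s2)) ^ ((1:ℝ)/2)
            * Real.exp (-(τ j * l1^2) / (8 * l * s2)))
      = ((l ^ ((1:ℝ)/2))⁻¹) ^ p * ((∏ j : Fin p, (l1^2 / (8 * s2)) ^ ((1:ℝ)/2))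
        * Real.exp (∑ j, -(τ j * l1^2) / (8 * l * s2))) := by
    rw [Real.exp_sum, ← Finset.prod_mul_distrib,
      show ((l ^ ((1:ℝ)/2))⁻¹)^p = ∏ _j : Fin p, (l ^ ((1:ℝ)/2))⁻¹ by simp,
      ← Finset.prod_mul_distrib]
    refine Finset.prod_congr rfl fun j _ => ?_
    rw [show l1^2 / (8 * l * s2) = l⁻¹ * (l1^2 / (8 * s2)) by field_simp,
      Real.mul_rpow (by positivity) (by positivity), Real.inv_rpow hl.le, mul_assoc]
  have hsum1 : (∑ j, -(l * τ j * (θ j)^2) / (2 * s2 * (τ j - 1)))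
      = -(1/2) * l * ∑ j, (τ j / (τ j - 1)) * (θ j)^2 / s2 := by
    rw [Finset.mul_sum]
    refine Finset.sum_congr rfl fun j _ => ?_
    have h := (hτ' j).ne'
    field_simp [hs.ne']
  have hsum2 : (∑ j, -(τ j * l1^2) / (8 * l * s2))
      = -(1/2) / l * ∑ j, τ j * l1^2 / (4 * s2) := by
    rw [Finset.mul_sum]
    refine Finset.sum_congr rfl fun j _ => ?_
    ring
  have harg : -(1/2) * ((∑ j, (τ j / (τ j - 1)) * (θ j)^2 / s2 + ψ2) * l
        + (∑ j, τ j * l1^2 / (4 * s2) + χ2) / l)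
      = (∑ j, -(l * τ j * (θ j)^2) / (2 * s2 * (τ j - 1)))
        + (∑ j, -(τ j * l1^2) / (8 * l * s2)) + -(1/2) * (χ2 / l + ψ2 * l) := by
    rw [hsum1, hsum2]
    ring
  rw [hprod1, hprod2, harg, Real.exp_add, Real.exp_add]
  have hPne : (l ^ ((1:ℝ)/2)) ≠ 0 := (Real.rpow_pos_of_pos hl _).ne'
  rw [inv_pow]
  field_simp
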